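/- arXiv:0810.0184 — 2 statements merged into one kernel-verified Lean document; each statement's English description precedes it below -/
import Mathlib

section
/- PBW-type basis for A_λ(n): for every λ ∈ ℂ and n ∈ ℕ, the family of elements ω^I E₊^α E₋^β := ω_1^{i_1} ⋯ ω_{2n+1}^{i_{2n+1}} E₊^α E₋^β, indexed by I = (i_1,…,i_{2n+1}) ∈ {0,1}^{2n+1} and α, β ∈ ℕ, is a basis of A_λ(n) as a ℂ-vector space. -/
/-- Generators of the algebra `A_λ(n)`: `ω_1, …, ω_{2n+1}`, `E₊`, `E₋`. -/
inductive AGen (n : ℕ) : Type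
  | w : Fin (2 * n + 1) → AGen n
  | Ep : AGen n
  | Em : AGen n

/-- The defining relations of `A_λ(n)`:
`ω_j ω_k + ω_k ω_j = 2δ_{jk}`, `E₊ ω_j = −ω_j E₊`, `E₋ ω_j = −ω_j E₋`, and
`E₊E₋ − E₋E₊ = −1/4 + i^n λ ω_1 ω_2 ⋯ ω_{2n+1}`. -/
inductive ARel (lam : ℂ) (n : ℕ) :
    FreeAlgebra ℂ (AGen n) → FreeAlgebra ℂ (AGen n) → Prop
  | ww (j k : Fin (2 * n + 1)) : ARel lam n
      (FreeAlgebra.ι ℂ (AGen.w j) * FreeAlgebra.ι ℂ (AGen.w k) +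
        FreeAlgebra.ι ℂ (AGen.w k) * FreeAlgebra.ι ℂ (AGen.w j))
      (if j = k then 2 else 0)
  | epw (j : Fin (2 * n + 1)) : ARel lam n
      (FreeAlgebra.ι ℂ AGen.Ep * FreeAlgebra.ι ℂ (AGen.w j))
      (-(FreeAlgebra.ι ℂ (AGen.w j) * FreeAlgebra.ι ℂ AGen.Ep))
  | emw (j : Fin (2 * n + 1)) : ARel lam n
      (FreeAlgebra.ι ℂ AGen.Em * FreeAlgebra.ι ℂ (AGen.w j))
      (-(FreeAlgebra.ι ℂ (AGen.w j) * FreeAlgebra.ι ℂ AGen.Em))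
  | ghost : ARel lam n
      (FreeAlgebra.ι ℂ AGen.Ep * FreeAlgebra.ι ℂ AGen.Em -
        FreeAlgebra.ι ℂ AGen.Em * FreeAlgebra.ι ℂ AGen.Ep)
      (algebraMap ℂ (FreeAlgebra ℂ (AGen n)) (-(1 / 4)) +
        (Complex.I ^ n * lam) •
          (List.ofFn fun i : Fin (2 * n + 1) => FreeAlgebra.ι ℂ (AGen.w i)).prod)

/-- The algebra `A_λ(n)`, presented by generators and relations. -/
abbrev ALam (lam : ℂ) (n : ℕ) : Type := RingQuot (ARel lam n)

/-- The image of the generator `ω_i` in `A_λ(n)`. -/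
noncomputable def ALam.omega (lam : ℂ) (n : ℕ) (i : Fin (2 * n + 1)) : ALam lam n :=
  RingQuot.mkAlgHom ℂ (ARel lam n) (FreeAlgebra.ι ℂ (AGen.w i))

/-- The image of the generator `E₊` in `A_λ(n)`. -/
noncomputable def ALam.Ep (lam : ℂ) (n : ℕ) : ALam lam n :=
  RingQuot.mkAlgHom ℂ (ARel lam n) (FreeAlgebra.ι ℂ AGen.Ep)

/-- The image of the generator `E₋` in `A_λ(n)`. -/
noncomputable def ALam.Em (lam : ℂ) (n : ℕ) : ALam lam n :=
  RingQuot.mkAlgHom ℂ (ARel lam n) (FreeAlgebra.ι ℂ AGen.Em)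


namespace ALamAux

noncomputable section
open Finset

/-- sign of an element of `Fin 2` -/
def eps (i : Fin 2) : ℂ := (-1) ^ (i : ℕ)

@[simp] lemma eps_zero : eps 0 = 1 := by simp [eps]
@[simp] lemma eps_one : eps 1 = -1 := by simp [eps]

lemma eps_sq (i : Fin 2) : eps i * eps i = 1 := by
  rw [eps, ← mul_pow]; norm_num

lemma eps_add_one (i : Fin 2) : eps (i + 1) = -eps i := by
  fin_cases i <;> simp

lemma fin2_cases (i : Fin 2) : i = 0 ∨ i = 1 := by omega

@[simp] lemma fin2_add_one_add_one (i : Fin 2) : i + 1 + 1 = i := by omega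

variable {N : ℕ}

/-- flip the `j`-th entry -/
def upd (I : Fin N → Fin 2) (j : Fin N) : Fin N → Fin 2 := Function.update I j (I j + 1)

/-- flip all entries -/
def cmpl (I : Fin N → Fin 2) : Fin N → Fin 2 := fun k => I k + 1

lemma upd_apply_self (I : Fin N → Fin 2) (j : Fin N) : upd I j j = I j + 1 := by
  simp [upd]

lemma upd_apply_ne (I : Fin N → Fin 2) {j k : Fin N} (h : k ≠ j) : upd I j k = I k := by
  simp [upd, Function.update_apply, h]

lemma upd_upd_self (I : Fin N → Fin 2) (j : Fin N) : upd (upd I j) j = I := by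
  funext k
  by_cases h : k = j
  · subst h; simp [upd_apply_self]
  · rw [upd_apply_ne _ h, upd_apply_ne _ h]

lemma upd_comm (I : Fin N → Fin 2) {j k : Fin N} (h : j ≠ k) :
    upd (upd I j) k = upd (upd I k) j := by
  funext m
  by_cases hm : m = j
  · subst hm
    rw [upd_apply_ne _ h, upd_apply_self, upd_apply_self, upd_apply_ne _ h]
  · by_cases hm' : m = k
    · subst hm'
      rw [upd_apply_self, upd_apply_ne _ (Ne.symm h), upd_apply_ne _ (Ne.symm h),
        upd_apply_self]
    · rw [upd_apply_ne _ hm', upd_apply_ne _ hm, upd_apply_ne _ hm, upd_apply_ne _ hm']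

lemma cmpl_upd (I : Fin N → Fin 2) (j : Fin N) : cmpl (upd I j) = upd (cmpl I) j := by
  funext k
  by_cases h : k = j
  · subst h; simp [cmpl, upd_apply_self]
  · simp [cmpl, upd_apply_ne _ h]

/-- sign picked up moving `ω_j` past `ω^I` restricted below `j` -/
def sgn (I : Fin N → Fin 2) (j : Fin N) : ℂ := ∏ k, if k < j then eps (I k) else 1

/-- total sign -/
def TT (I : Fin N → Fin 2) : ℂ := ∏ k, eps (I k)

/-- sign of the full product of ω's acting on `ω^I` -/
def Sfull (I : Fin N → Fin 2) : ℂ := ∏ j, sgn I j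

lemma sgn_congr {I I' : Fin N → Fin 2} {j : Fin N} (h : ∀ k, k < j → I k = I' k) :
    sgn I j = sgn I' j := by
  refine Finset.prod_congr rfl fun k _ => ?_
  by_cases hk : k < j
  · simp [hk, h k hk]
  · simp [hk]

lemma sgn_sq (I : Fin N → Fin 2) (j : Fin N) : sgn I j * sgn I j = 1 := by
  rw [sgn, ← Finset.prod_mul_distrib]
  refine Finset.prod_eq_one fun k _ => ?_
  by_cases hk : k < j <;> simp [hk, eps_sq]

lemma sgn_upd (I : Fin N → Fin 2) (j k0 : Fin N) :
    sgn (upd I k0) j = (if k0 < j then -1 else 1) * sgn I j := by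
  have hfun : (fun k => if k < j then eps (upd I k0 k) else 1)
      = Function.update (fun k => if k < j then eps (I k) else 1) k0
        (if k0 < j then -eps (I k0) else 1) := by
    funext k
    by_cases hk : k = k0
    · subst hk
      simp only [Function.update_self, upd_apply_self, eps_add_one]
    · rw [Function.update_of_ne hk, upd_apply_ne _ hk]
  rw [sgn, hfun, Finset.prod_update_of_mem (Finset.mem_univ k0), sgn,
    ← Finset.mul_prod_erase _ _ (Finset.mem_univ k0)]
  rw [← Finset.erase_eq]
  by_cases h : k0 < j <;> simp [h] <;> ring

lemma sgn_cmpl (I : Fin N → Fin 2) (j : Fin N) :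
    sgn (cmpl I) j = (-1) ^ (j : ℕ) * sgn I j := by
  have : sgn (cmpl I) j = (∏ k, if k < j then (-1 : ℂ) else 1) * sgn I j := by
    rw [sgn, sgn, ← Finset.prod_mul_distrib]
    refine Finset.prod_congr rfl fun k _ => ?_
    by_cases hk : k < j <;> simp [hk, cmpl, eps_add_one]
  rw [this]
  congr 1
  rw [← Finset.prod_filter]
  have hf : Finset.univ.filter (fun k => k < j) = Finset.Iio j := by
    ext k; simp
  rw [hf, Finset.prod_const, Fin.card_Iio]

lemma TT_sq (I : Fin N → Fin 2) : TT I * TT I = 1 := by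
  rw [TT, ← Finset.prod_mul_distrib]
  exact Finset.prod_eq_one fun k _ => eps_sq _

lemma TT_upd (I : Fin N → Fin 2) (j : Fin N) : TT (upd I j) = -TT I := by
  have hfun : (fun k => eps (upd I j k)) = Function.update (fun k => eps (I k)) j (-eps (I j)) := by
    funext k
    by_cases hk : k = j
    · subst hk; simp [upd_apply_self, eps_add_one]
    · rw [Function.update_of_ne hk, upd_apply_ne _ hk]
  rw [TT, hfun, Finset.prod_update_of_mem (Finset.mem_univ j), TT,
    ← Finset.mul_prod_erase _ _ (Finset.mem_univ j), ← Finset.erase_eq]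
  ring

lemma TT_cmpl (I : Fin N → Fin 2) : TT (cmpl I) = (-1) ^ N * TT I := by
  rw [TT, TT]
  calc (∏ k, eps (cmpl I k)) = ∏ k : Fin N, (-1) * eps (I k) := by
        refine Finset.prod_congr rfl fun k _ => ?_
        simp [cmpl, eps_add_one]
    _ = (-1) ^ N * ∏ k, eps (I k) := by
        rw [Finset.prod_mul_distrib, Finset.prod_const, Finset.card_univ, Fintype.card_fin]

lemma Sfull_upd (I : Fin N → Fin 2) (j : Fin N) :
    Sfull (upd I j) = (-1) ^ (N - 1 - (j : ℕ)) * Sfull I := by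
  rw [Sfull, Sfull]
  calc (∏ k, sgn (upd I j) k) = ∏ k, (if j < k then (-1:ℂ) else 1) * sgn I k := by
        exact Finset.prod_congr rfl fun k _ => sgn_upd I k j
    _ = (∏ k, if j < k then (-1:ℂ) else 1) * ∏ k, sgn I k := Finset.prod_mul_distrib
    _ = _ := by
        congr 1
        rw [← Finset.prod_filter]
        have hf : Finset.univ.filter (fun k => j < k) = Finset.Ioi j := by
          ext k; simp
        rw [hf, Finset.prod_const, Fin.card_Ioi]

lemma sgn_zero_fn (j : Fin N) : sgn (fun _ => 0) j = 1 := by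
  rw [sgn]
  refine Finset.prod_eq_one fun k _ => ?_
  by_cases hk : k < j <;> simp [hk]

@[simp] lemma TT_zero_fn : TT (fun _ : Fin N => (0 : Fin 2)) = 1 := by
  rw [TT]; exact Finset.prod_eq_one fun k _ => by simp

lemma TT_one_fn : TT (fun _ : Fin N => (1 : Fin 2)) = (-1) ^ N := by
  rw [TT]
  simp [Finset.prod_const]

open Finsupp

variable (N : ℕ)

/-- index of normal-form monomials -/
abbrev BI := (Fin N → Fin 2) × ℕ × ℕ

/-- the representation space -/
abbrev VV := BI N →₀ ℂ

def act (f : BI N → VV N) : Module.End ℂ (VV N) := Finsupp.lift (VV N) ℂ (BI N) f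

@[simp] lemma act_single (f : BI N → VV N) (p : BI N) (c : ℂ) :
    act N f (single p c) = c • f p := by
  simp [act, Finsupp.lift_apply, Finsupp.sum_single_index]

/-- `(cc α)` is `0` for even `α` and `1` for odd `α`. -/
def cc (a : ℕ) : ℂ := if Even a then 0 else 1

@[simp] lemma cc_zero : cc 0 = 0 := by simp [cc]
@[simp] lemma cc_one : cc 1 = 1 := by simp [cc]

lemma cc_add_cc_succ (a : ℕ) : cc a + cc (a + 1) = 1 := by
  by_cases h : Even a <;> simp [cc, h, Nat.even_add_one]

def wAct (j : Fin N) : Module.End ℂ (VV N) :=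
  act N fun p => sgn p.1 j • single (upd p.1 j, p.2) 1

def epAct : Module.End ℂ (VV N) :=
  act N fun p => TT p.1 • single (p.1, p.2.1 + 1, p.2.2) 1

variable (μ : ℂ)

def DD (I : Fin N → Fin 2) (a : ℕ) : ℂ := cc a * (-μ) * (Sfull I * TT I)

def emAct : Module.End ℂ (VV N) :=
  act N fun p =>
    TT p.1 • single (p.1, p.2.1, p.2.2 + 1) 1 +
    (TT p.1 * (p.2.1 : ℂ) / 4) • single (p.1, p.2.1 - 1, p.2.2) 1 +
    DD N μ p.1 p.2.1 • single (cmpl p.1, p.2.1 - 1, p.2.2) 1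

lemma wAct_single (j : Fin N) (I : Fin N → Fin 2) (a b : ℕ) (c : ℂ) :
    wAct N j (single (I, a, b) c) = (c * sgn I j) • single (upd I j, a, b) 1 := by
  rw [wAct, act_single, smul_smul]

lemma epAct_single (I : Fin N → Fin 2) (a b : ℕ) (c : ℂ) :
    epAct N (single (I, a, b) c) = (c * TT I) • single (I, a + 1, b) 1 := by
  rw [epAct, act_single, smul_smul]

lemma emAct_single (I : Fin N → Fin 2) (a b : ℕ) (c : ℂ) :
    emAct N μ (single (I, a, b) c) =
      (c * TT I) • single (I, a, b + 1) 1 +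
      (c * (TT I * (a : ℂ) / 4)) • single (I, a - 1, b) 1 +
      (c * DD N μ I a) • single (cmpl I, a - 1, b) 1 := by
  rw [emAct, act_single, smul_add, smul_add, smul_smul, smul_smul, smul_smul]

/-- the `ω_jω_k + ω_kω_j = 2δ_{jk}` relation holds in the representation. -/
lemma rel_ww (j k : Fin N) :
    wAct N j * wAct N k + wAct N k * wAct N j
      = if j = k then (2 : Module.End ℂ (VV N)) else 0 := by
  refine Finsupp.lhom_ext fun p c => ?_
  obtain ⟨I, a, b⟩ := p
  by_cases h : j = k
  · subst h
    simp only [if_true, LinearMap.add_apply, Module.End.mul_apply, wAct_single, map_smul]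
    rw [sgn_upd, upd_upd_self]
    have h2 : (2 : Module.End ℂ (VV N)) = 1 + 1 := by norm_num
    rw [h2, LinearMap.add_apply, Module.End.one_apply]
    have hs := sgn_sq I j
    have hsingle : single ((I, a, b) : BI N) c = c • single ((I, a, b) : BI N) 1 := by
      rw [smul_single, smul_eq_mul, mul_one]
    rw [hsingle]
    match_scalars
    simp only [if_neg (lt_irrefl j)]
    linear_combination (2 * c) * hs
  · simp only [if_neg h, LinearMap.add_apply, Module.End.mul_apply, wAct_single, map_smul,
      LinearMap.zero_apply]
    rw [smul_smul, smul_smul, sgn_upd I j k, sgn_upd I k j, upd_comm I h]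
    rw [← add_smul]
    convert zero_smul ℂ _
    rcases lt_or_gt_of_ne h with hlt | hgt
    · rw [if_pos hlt, if_neg (not_lt.mpr hlt.le)]; ring
    · rw [if_neg (not_lt.mpr hgt.le), if_pos hgt]; ring

/-- the `E₊ω_j = -ω_jE₊` relation holds. -/
lemma rel_epw (j : Fin N) :
    epAct N * wAct N j = -(wAct N j * epAct N) := by
  refine Finsupp.lhom_ext fun p c => ?_
  obtain ⟨I, a, b⟩ := p
  simp only [Module.End.mul_apply, LinearMap.neg_apply, wAct_single, epAct_single,
    map_smul]
  rw [TT_upd, smul_smul, smul_smul, ← neg_smul]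
  congr 1
  ring

lemma neg_one_pow_odd_helper {N : ℕ} (hN : Odd N) (j : Fin N) :
    ((-1 : ℂ)) ^ (N - 1 - (j : ℕ)) = (-1) ^ (j : ℕ) := by
  obtain ⟨m, rfl⟩ := hN
  have hj : (j : ℕ) ≤ 2 * m := by omega
  have h1 : (2 * m + 1) - 1 - (j : ℕ) = 2 * m - (j : ℕ) := by omega
  rw [h1]
  have h2 : (-1 : ℂ) ^ (2 * m - (j : ℕ)) * (-1) ^ (j : ℕ) = 1 := by
    rw [← pow_add, Nat.sub_add_cancel hj, pow_mul]; norm_num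
  have h3 : (-1 : ℂ) ^ (j : ℕ) * (-1) ^ (j : ℕ) = 1 := by
    rw [← pow_add, ← two_mul, pow_mul]; norm_num
  calc (-1 : ℂ) ^ (2 * m - (j : ℕ))
      = (-1 : ℂ) ^ (2 * m - (j : ℕ)) * ((-1) ^ (j : ℕ) * (-1) ^ (j : ℕ)) := by rw [h3, mul_one]
    _ = ((-1 : ℂ) ^ (2 * m - (j : ℕ)) * (-1) ^ (j : ℕ)) * (-1) ^ (j : ℕ) := by ring
    _ = (-1) ^ (j : ℕ) := by rw [h2, one_mul]

/-- the `E₋ω_j = -ω_jE₋` relation holds. -/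
lemma rel_emw (hN : Odd N) (j : Fin N) :
    emAct N μ * wAct N j = -(wAct N j * emAct N μ) := by
  refine Finsupp.lhom_ext fun p c => ?_
  obtain ⟨I, a, b⟩ := p
  simp only [Module.End.mul_apply, LinearMap.neg_apply, wAct_single, map_smul, map_add,
    emAct_single]
  rw [cmpl_upd]
  have hT := TT_upd I j
  have hD : DD N μ (upd I j) a = -((-1 : ℂ) ^ (j : ℕ)) * DD N μ I a := by
    rw [DD, DD, Sfull_upd, TT_upd, neg_one_pow_odd_helper hN j]
    ring
  match_scalars
  · linear_combination (c * sgn I j) * hT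
  · linear_combination (c * sgn I j * (a : ℂ) / 4) * hT
  · rw [hD, sgn_cmpl]; ring
lemma prod_wAct_pow_single (ls : List (Fin N)) (hs : ls.Pairwise (· < ·))
    (I J : Fin N → Fin 2) (a b : ℕ) :
    ((ls.map fun j => wAct N j ^ (I j : ℕ)).prod) (single (J, a, b) 1)
    = ((ls.map fun j => sgn J j ^ (I j : ℕ)).prod) •
        single (((fun k => J k + if k ∈ ls then I k else 0) : Fin N → Fin 2), a, b) 1 := by
  induction ls with
  | nil =>
    simp only [List.map_nil, List.prod_nil, Module.End.one_apply, List.not_mem_nil, if_false,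
      one_smul]
    rw [show ((fun k => J k + (0 : Fin 2)) : Fin N → Fin 2) = J from funext fun k => add_zero _]
  | cons j t ih =>
    have hst : t.Pairwise (· < ·) := hs.of_cons
    have hjt : ∀ k ∈ t, j < k := fun k hk => List.rel_of_pairwise_cons hs hk
    rw [List.map_cons, List.prod_cons, Module.End.mul_apply, ih hst, map_smul,
      List.map_cons, List.prod_cons]
    set J1 : Fin N → Fin 2 := fun k => J k + if k ∈ t then I k else 0 with hJ1
    have hJ1lt : ∀ k, k < j → J1 k = J k := by
      intro k hk
      have hkt : k ∉ t := fun h => absurd (hjt k h) (not_lt.mpr hk.le)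
      simp [hJ1, hkt]
    have htarget0 : I j = 0 →
        ((fun k => J k + if k ∈ j :: t then I k else 0) : Fin N → Fin 2) = J1 := by
      intro h0
      funext k
      by_cases hk : k = j
      · subst hk
        have hkt : k ∉ t := fun h => absurd (hjt k h) (lt_irrefl k)
        simp [hJ1, h0, hkt]
      · simp [hJ1, List.mem_cons, hk]
    rcases fin2_cases (I j) with h0 | h1
    · rw [h0, htarget0 h0]
      simp only [Fin.val_zero, pow_zero, Module.End.one_apply, one_mul]
    · have htarget1 :
          ((fun k => J k + if k ∈ j :: t then I k else 0) : Fin N → Fin 2) = upd J1 j := by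
        funext k
        by_cases hk : k = j
        · subst hk
          have hkt : k ∉ t := fun h => absurd (hjt k h) (lt_irrefl k)
          simp [upd_apply_self, hJ1, hkt, h1]
        · rw [upd_apply_ne _ hk]
          simp [hJ1, List.mem_cons, hk]
      rw [h1, htarget1]
      simp only [Fin.val_one, pow_one, wAct_single, one_mul]
      rw [sgn_congr (fun k hk => hJ1lt k hk), smul_smul, mul_comm]

lemma cmpl_eq_add_one (J : Fin N → Fin 2) :
    cmpl J = fun k => J k + if k ∈ List.finRange N then (1 : Fin 2) else 0 := by
  funext k
  simp [cmpl, List.mem_finRange]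

lemma wfull_single (J : Fin N → Fin 2) (a b : ℕ) (c : ℂ) :
    ((List.ofFn fun i => wAct N i).prod) (single (J, a, b) c)
      = (c * Sfull J) • single (cmpl J, a, b) 1 := by
  have hsorted : (List.finRange N).Pairwise (· < ·) := List.pairwise_lt_finRange N
  have h1 : (List.ofFn fun i => wAct N i)
      = (List.finRange N).map fun j => wAct N j ^ (((fun _ => 1) : Fin N → Fin 2) j : ℕ) := by
    rw [List.ofFn_eq_map]
    exact List.map_congr_left fun j _ => by simp
  have hc : single ((J, a, b) : BI N) c = c • single ((J, a, b) : BI N) 1 := by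
    rw [smul_single, smul_eq_mul, mul_one]
  rw [h1, hc, map_smul, prod_wAct_pow_single N _ hsorted]
  rw [← cmpl_eq_add_one]
  rw [smul_smul]
  congr 2
  have : ((List.finRange N).map fun j =>
      sgn J j ^ (((fun _ => 1) : Fin N → Fin 2) j : ℕ)) = (List.finRange N).map fun j => sgn J j := by
    exact List.map_congr_left fun j _ => by simp
  rw [this, ← List.ofFn_eq_map, List.prod_ofFn, Sfull]

/-- the ghost relation holds in the representation. -/
lemma rel_ghost (hN : Odd N) :
    epAct N * emAct N μ - emAct N μ * epAct N
      = algebraMap ℂ (Module.End ℂ (VV N)) (-(1 / 4)) +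
          μ • (List.ofFn fun i => wAct N i).prod := by
  refine Finsupp.lhom_ext fun p c => ?_
  obtain ⟨I, a, b⟩ := p
  have hTc : TT (cmpl I) = -TT I := by
    rw [TT_cmpl, Odd.neg_one_pow hN]; ring
  have hT := TT_sq I
  have hcc := cc_add_cc_succ a
  have hsingle : single ((I, a, b) : BI N) c = c • single ((I, a, b) : BI N) 1 := by
    rw [smul_single, smul_eq_mul, mul_one]
  simp only [LinearMap.sub_apply, Module.End.mul_apply, LinearMap.add_apply,
    Module.algebraMap_end_apply, LinearMap.smul_apply, wfull_single,
    epAct_single, emAct_single, map_add, map_smul, smul_add, hTc, hsingle]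
  rcases a with _ | a'
  · simp only [Nat.cast_zero, mul_zero, zero_div, zero_smul, smul_zero, add_zero, zero_add,
      Nat.zero_sub, DD, cc_zero, zero_mul, Nat.add_sub_cancel, Nat.cast_one, cc_one]
    match_scalars
    all_goals try ring
    · linear_combination (-(c / 4)) * hT
    · linear_combination (c * μ * Sfull I) * hT
  · simp only [Nat.add_sub_cancel, DD]
    have hcc2 : cc (1 + a') + cc (2 + a') = 1 := by
      rw [show 1 + a' = a' + 1 from Nat.add_comm _ _, show 2 + a' = (a' + 1) + 1 from by omega]
      exact cc_add_cc_succ _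
    match_scalars
    all_goals try ring
    · linear_combination (-(c / 4)) * hT
    · linear_combination (c * μ * Sfull I * (cc (1 + a') + cc (2 + a'))) * hT +
        (c * μ * Sfull I) * hcc2
lemma sgn_zero_succ {N : ℕ} (I : Fin (N + 1) → Fin 2) : sgn I 0 = 1 :=
  Finset.prod_eq_one fun k _ => by simp

lemma sgn_succ {N : ℕ} (I : Fin (N + 1) → Fin 2) (j : Fin N) :
    sgn I j.succ = eps (I 0) * sgn (I ∘ Fin.succ) j := by
  rw [sgn, Fin.prod_univ_succ]
  congr 1
  · rw [sgn]
    refine Finset.prod_congr rfl fun k _ => ?_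
    simp only [Fin.succ_lt_succ_iff]
    rfl

lemma TT_succ {N : ℕ} (I : Fin (N + 1) → Fin 2) : TT I = eps (I 0) * TT (I ∘ Fin.succ) := by
  rw [TT, Fin.prod_univ_succ]
  rfl

variable {A : Type*} [Ring A] [Algebra ℂ A]

/-- the normal-form product `ω^I` -/
def PP {N : ℕ} (w : Fin N → A) (I : Fin N → Fin 2) : A :=
  (List.ofFn fun j => w j ^ (I j : ℕ)).prod

lemma PP_succ {N : ℕ} (w : Fin (N + 1) → A) (I : Fin (N + 1) → Fin 2) :
    PP w I = w 0 ^ (I 0 : ℕ) * PP (w ∘ Fin.succ) (I ∘ Fin.succ) := by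
  rw [PP, List.ofFn_succ, List.prod_cons]
  rfl

lemma PP_zero_fn {N : ℕ} (w : Fin N → A) : PP w (fun _ => 0) = 1 := by
  rw [PP]
  refine List.prod_eq_one fun x hx => ?_
  rw [List.mem_ofFn] at hx
  obtain ⟨j, rfl⟩ := hx
  simp

lemma L_move : ∀ (N : ℕ) (w : Fin N → A)
    (_ : ∀ j k, j ≠ k → w j * w k = -(w k * w j)) (_ : ∀ j, w j * w j = 1)
    (I : Fin N → Fin 2) (j : Fin N),
    w j * PP w I = sgn I j • PP w (upd I j) := by
  intro N
  induction N with
  | zero => exact fun w _ _ I j => j.elim0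
  | succ N ih =>
    intro w ha hs I j
    have ha' : ∀ j k, j ≠ k → (w ∘ Fin.succ) j * (w ∘ Fin.succ) k
        = -((w ∘ Fin.succ) k * (w ∘ Fin.succ) j) :=
      fun j k h => ha j.succ k.succ (fun hh => h (Fin.succ_injective _ hh))
    have hs' : ∀ j, (w ∘ Fin.succ) j * (w ∘ Fin.succ) j = 1 := fun j => hs j.succ
    induction j using Fin.cases with
    | zero =>
      rw [PP_succ, sgn_zero_succ, one_smul, PP_succ]
      have h1 : upd I 0 ∘ Fin.succ = I ∘ Fin.succ :=
        funext fun k => upd_apply_ne _ (Fin.succ_ne_zero k)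
      rw [h1, upd_apply_self]
      rcases fin2_cases (I 0) with h | h <;> rw [h]
      · norm_num
      · rw [show ((1 : Fin 2) + 1) = 0 from rfl]
        norm_num
        rw [← mul_assoc, hs 0, one_mul]
    | succ j' =>
      have hcomm : w j'.succ * w 0 ^ (I 0 : ℕ) = eps (I 0) • (w 0 ^ (I 0 : ℕ) * w j'.succ) := by
        rcases fin2_cases (I 0) with h | h <;> rw [h]
        · simp
        · rw [eps_one, neg_one_smul]
          norm_num
          exact ha j'.succ 0 (Fin.succ_ne_zero j')
      have ih' := ih (w ∘ Fin.succ) ha' hs' (I ∘ Fin.succ) j'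
      simp only [Function.comp_apply] at ih'
      have hupd : upd I j'.succ ∘ Fin.succ = upd (I ∘ Fin.succ) j' := by
        funext k
        by_cases hk : k = j'
        · show upd I j'.succ k.succ = _
          rw [hk, upd_apply_self, upd_apply_self]
          rfl
        · show upd I j'.succ k.succ = _
          rw [upd_apply_ne _ (fun hh => hk (Fin.succ_injective _ hh)),
            upd_apply_ne _ hk]
          rfl
      calc w j'.succ * PP w I
          = w j'.succ * (w 0 ^ (I 0 : ℕ) * PP (w ∘ Fin.succ) (I ∘ Fin.succ)) := by
            rw [PP_succ]
        _ = (w j'.succ * w 0 ^ (I 0 : ℕ)) * PP (w ∘ Fin.succ) (I ∘ Fin.succ) := by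
            rw [mul_assoc]
        _ = eps (I 0) • (w 0 ^ (I 0 : ℕ) * (w j'.succ * PP (w ∘ Fin.succ) (I ∘ Fin.succ))) := by
            rw [hcomm, smul_mul_assoc, mul_assoc]
        _ = eps (I 0) • (w 0 ^ (I 0 : ℕ) *
              (sgn (I ∘ Fin.succ) j' • PP (w ∘ Fin.succ) (upd (I ∘ Fin.succ) j'))) := by
            rw [ih']
        _ = (eps (I 0) * sgn (I ∘ Fin.succ) j') •
              (w 0 ^ (I 0 : ℕ) * PP (w ∘ Fin.succ) (upd (I ∘ Fin.succ) j')) := by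
            rw [mul_smul_comm, smul_smul]
        _ = sgn I j'.succ • PP w (upd I j'.succ) := by
            rw [sgn_succ, PP_succ, hupd, upd_apply_ne _ (Fin.succ_ne_zero j').symm]

lemma L_comm : ∀ (N : ℕ) (w : Fin N → A) (x : A)
    (_ : ∀ j, x * w j = -(w j * x)) (I : Fin N → Fin 2),
    x * PP w I = TT I • (PP w I * x) := by
  intro N
  induction N with
  | zero =>
    intro w x _ I
    have h1 : PP w I = 1 := by
      rw [PP]
      simp [List.ofFn_zero]
    have h2 : TT I = 1 := by
      rw [TT]
      simp [Finset.univ_eq_empty]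
    rw [h1, h2]
    simp
  | succ N ih =>
    intro w x hx I
    have hcomm : x * w 0 ^ (I 0 : ℕ) = eps (I 0) • (w 0 ^ (I 0 : ℕ) * x) := by
      rcases fin2_cases (I 0) with h | h <;> rw [h]
      · simp
      · rw [eps_one, neg_one_smul]
        norm_num
        exact hx 0
    have ih' := ih (w ∘ Fin.succ) x (fun j => hx j.succ) (I ∘ Fin.succ)
    calc x * PP w I
        = (x * w 0 ^ (I 0 : ℕ)) * PP (w ∘ Fin.succ) (I ∘ Fin.succ) := by
          rw [PP_succ, mul_assoc]
      _ = eps (I 0) • (w 0 ^ (I 0 : ℕ) * (x * PP (w ∘ Fin.succ) (I ∘ Fin.succ))) := by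
          rw [hcomm, smul_mul_assoc, mul_assoc]
      _ = eps (I 0) • (w 0 ^ (I 0 : ℕ) *
            (TT (I ∘ Fin.succ) • (PP (w ∘ Fin.succ) (I ∘ Fin.succ) * x))) := by
          rw [ih']
      _ = (eps (I 0) * TT (I ∘ Fin.succ)) •
            ((w 0 ^ (I 0 : ℕ) * PP (w ∘ Fin.succ) (I ∘ Fin.succ)) * x) := by
          rw [mul_smul_comm, smul_smul, mul_assoc]
      _ = TT I • (PP w I * x) := by rw [← TT_succ, ← PP_succ]

lemma L_comm_rev (N : ℕ) (w : Fin N → A) (x : A)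
    (hx : ∀ j, x * w j = -(w j * x)) (I : Fin N → Fin 2) :
    PP w I * x = TT I • (x * PP w I) := by
  rw [L_comm N w x hx I, smul_smul, TT_sq, one_smul]

lemma L_PPomega : ∀ (N : ℕ) (w : Fin N → A)
    (_ : ∀ j k, j ≠ k → w j * w k = -(w k * w j)) (_ : ∀ j, w j * w j = 1)
    (I : Fin N → Fin 2),
    ∃ c : ℂ, PP w I * PP w (fun _ => 1) = c • PP w (cmpl I) := by
  intro N
  induction N with
  | zero =>
    intro w _ _ I
    refine ⟨1, ?_⟩
    have h1 : ∀ (J : Fin 0 → Fin 2), PP w J = 1 := by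
      intro J
      rw [PP]
      simp [List.ofFn_zero]
    rw [h1, h1, h1]
    simp
  | succ N ih =>
    intro w ha hs I
    have ha' : ∀ j k, j ≠ k → (w ∘ Fin.succ) j * (w ∘ Fin.succ) k
        = -((w ∘ Fin.succ) k * (w ∘ Fin.succ) j) :=
      fun j k h => ha j.succ k.succ (fun hh => h (Fin.succ_injective _ hh))
    have hs' : ∀ j, (w ∘ Fin.succ) j * (w ∘ Fin.succ) j = 1 := fun j => hs j.succ
    obtain ⟨c', hc'⟩ := ih (w ∘ Fin.succ) ha' hs' (I ∘ Fin.succ)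
    have hrev : PP (w ∘ Fin.succ) (I ∘ Fin.succ) * w 0
        = TT (I ∘ Fin.succ) • (w 0 * PP (w ∘ Fin.succ) (I ∘ Fin.succ)) := by
      refine L_comm_rev N (w ∘ Fin.succ) (w 0) (fun j => ?_) (I ∘ Fin.succ)
      exact ha 0 j.succ (Ne.symm (Fin.succ_ne_zero j))
    refine ⟨TT (I ∘ Fin.succ) * c', ?_⟩
    have hones : ((fun _ => 1) : Fin (N + 1) → Fin 2) ∘ Fin.succ = fun _ => 1 := rfl
    have hcm : cmpl I ∘ Fin.succ = cmpl (I ∘ Fin.succ) := rfl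
    calc PP w I * PP w (fun _ => 1)
        = (w 0 ^ (I 0 : ℕ) * PP (w ∘ Fin.succ) (I ∘ Fin.succ)) *
            (w 0 ^ ((1 : Fin 2) : ℕ) * PP (w ∘ Fin.succ) (fun _ => 1)) := by
          rw [PP_succ w I, PP_succ w (fun _ => 1), hones]
      _ = w 0 ^ (I 0 : ℕ) * ((PP (w ∘ Fin.succ) (I ∘ Fin.succ) * w 0) *
            PP (w ∘ Fin.succ) (fun _ => 1)) := by
          rw [Fin.val_one, pow_one]
          noncomm_ring
      _ = TT (I ∘ Fin.succ) • ((w 0 ^ (I 0 : ℕ) * w 0) *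
            (PP (w ∘ Fin.succ) (I ∘ Fin.succ) * PP (w ∘ Fin.succ) (fun _ => 1))) := by
          rw [hrev, smul_mul_assoc, mul_smul_comm]
          congr 1
          noncomm_ring
      _ = TT (I ∘ Fin.succ) • ((w 0 ^ (I 0 : ℕ) * w 0) *
            (c' • PP (w ∘ Fin.succ) (cmpl (I ∘ Fin.succ)))) := by rw [hc']
      _ = (TT (I ∘ Fin.succ) * c') • ((w 0 ^ (I 0 : ℕ) * w 0) *
            PP (w ∘ Fin.succ) (cmpl (I ∘ Fin.succ))) := by
          rw [mul_smul_comm, smul_smul]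
      _ = (TT (I ∘ Fin.succ) * c') • PP w (cmpl I) := by
          have hw : w 0 ^ (I 0 : ℕ) * w 0 = w 0 ^ ((cmpl I 0 : Fin 2) : ℕ) := by
            rcases fin2_cases (I 0) with h | h
            · have h2 : cmpl I 0 = 1 := by simp [cmpl, h]
              rw [h, h2]
              norm_num
            · have h2 : cmpl I 0 = 0 := by
                show I 0 + 1 = 0
                rw [h]
                rfl
              rw [h, h2]
              simpa using hs 0
          rw [PP_succ w (cmpl I), hcm, ← hw]
lemma anti_pow (x y : A) (h : y * x = -(x * y)) (k : ℕ) :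
    x ^ k * y = ((-1 : ℂ) ^ k) • (y * x ^ k) := by
  induction k with
  | zero => simp
  | succ k ih =>
    have hxy : x * y = -(y * x) := by rw [h, neg_neg]
    calc x ^ (k + 1) * y = x * (x ^ k * y) := by rw [pow_succ', mul_assoc]
      _ = ((-1 : ℂ) ^ k) • ((x * y) * x ^ k) := by rw [ih, mul_smul_comm, mul_assoc]
      _ = ((-1 : ℂ) ^ k) • ((-(y * x)) * x ^ k) := by rw [hxy]
      _ = -((-1 : ℂ) ^ k • (y * x ^ (k + 1))) := by
          rw [neg_mul, smul_neg, mul_assoc, ← pow_succ']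
      _ = ((-1 : ℂ) ^ (k + 1)) • (y * x ^ (k + 1)) := by
          rw [show ((-1 : ℂ)) ^ (k + 1) = (-1) ^ k * (-1) from pow_succ _ _, mul_smul,
            neg_one_smul, smul_neg]

section ALamSide

variable (lam : ℂ) (n : ℕ)

local notation "ωA" => ALam.omega lam n
local notation "Epp" => ALam.Ep lam n
local notation "Emm" => ALam.Em lam n

def Omg : ALam lam n := (List.ofFn fun i => ALam.omega lam n i).prod

def muC : ℂ := Complex.I ^ n * lam

lemma alam_ww_ne {j k : Fin (2 * n + 1)} (h : j ≠ k) :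
    ωA j * ωA k = -(ωA k * ωA j) := by
  have hr := RingQuot.mkAlgHom_rel ℂ (ARel.ww (lam := lam) j k)
  rw [map_add, map_mul, map_mul, if_neg h, map_zero] at hr
  simp only [ALam.omega]
  rw [eq_neg_of_add_eq_zero_left hr]

lemma alam_ww_sq (j : Fin (2 * n + 1)) : ωA j * ωA j = 1 := by
  have hr := RingQuot.mkAlgHom_rel ℂ (ARel.ww (lam := lam) j j)
  rw [map_add, map_mul, if_pos rfl, map_ofNat] at hr
  have h2 : (2 : ℂ) • (ωA j * ωA j) = (2 : ℂ) • (1 : ALam lam n) := by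
    simp only [ALam.omega]
    rw [two_smul, hr, Algebra.smul_def, mul_one, map_ofNat]
  calc ωA j * ωA j = (2 : ℂ)⁻¹ • ((2 : ℂ) • (ωA j * ωA j)) := by
        rw [smul_smul, inv_mul_cancel₀ (two_ne_zero), one_smul]
    _ = (2 : ℂ)⁻¹ • ((2 : ℂ) • (1 : ALam lam n)) := by rw [h2]
    _ = 1 := by rw [smul_smul, inv_mul_cancel₀ (two_ne_zero), one_smul]

lemma alam_epw (j : Fin (2 * n + 1)) : Epp * ωA j = -(ωA j * Epp) := by
  have hr := RingQuot.mkAlgHom_rel ℂ (ARel.epw (lam := lam) j)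
  rw [map_mul, map_neg, map_mul] at hr
  simp only [ALam.omega, ALam.Ep]
  exact hr

lemma alam_emw (j : Fin (2 * n + 1)) : Emm * ωA j = -(ωA j * Emm) := by
  have hr := RingQuot.mkAlgHom_rel ℂ (ARel.emw (lam := lam) j)
  rw [map_mul, map_neg, map_mul] at hr
  simp only [ALam.omega, ALam.Em]
  exact hr

lemma alam_ghost :
    Epp * Emm - Emm * Epp = (-(1 / 4) : ℂ) • (1 : ALam lam n) + muC lam n • Omg lam n := by
  have hr := RingQuot.mkAlgHom_rel ℂ (ARel.ghost (lam := lam) (n := n))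
  rw [map_sub, map_mul, map_mul, map_add, AlgHom.commutes, map_smul, map_list_prod,
    List.map_ofFn] at hr
  simp only [ALam.Ep, ALam.Em]
  rw [hr, Algebra.algebraMap_eq_smul_one, Omg, muC]
  rfl

lemma alam_Omg_eq : Omg lam n = PP (ALam.omega lam n) (fun _ => 1) := by
  rw [Omg, PP]
  exact congrArg List.prod (congrArg List.ofFn (funext fun j => by simp))

lemma alam_OmgEp : Omg lam n * Epp = -(Epp * Omg lam n) := by
  have hOmg := alam_Omg_eq lam n
  have h := L_comm (2 * n + 1) (ALam.omega lam n) Epp (alam_epw lam n) (fun _ => 1)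
  rw [TT_one_fn, ← hOmg] at h
  have hodd : Odd (2 * n + 1) := ⟨n, rfl⟩
  rw [Odd.neg_one_pow hodd] at h
  rw [h]
  module

lemma alam_OmgEp' : Omg lam n * Epp = (-1 : ℂ) • (Epp * Omg lam n) := by
  rw [alam_OmgEp]
  module

lemma alam_EmEp : Emm * Epp = Epp * Emm + (1 / 4 : ℂ) • (1 : ALam lam n) +
    (-muC lam n) • Omg lam n := by
  have hg := alam_ghost lam n
  have h1 : Emm * Epp = Epp * Emm - ((-(1 / 4) : ℂ) • (1 : ALam lam n) + muC lam n • Omg lam n) := by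
    rw [← hg]
    abel
  rw [h1]
  module

lemma alam_EmEp_pow (a : ℕ) : Emm * Epp ^ (a + 1) =
    Epp ^ (a + 1) * Emm + (((a : ℂ) + 1) / 4) • Epp ^ a +
      (cc (a + 1) * (-muC lam n)) • (Epp ^ a * Omg lam n) := by
  induction a with
  | zero =>
    simpa [pow_one] using alam_EmEp lam n
  | succ a ih =>
    have hcc := cc_add_cc_succ (a + 1)
    calc Emm * Epp ^ (a + 1 + 1) = (Emm * Epp ^ (a + 1)) * Epp := by
          rw [pow_succ, mul_assoc]
      _ = Epp ^ (a + 1) * (Emm * Epp) + (((a : ℂ) + 1) / 4) • (Epp ^ a * Epp) +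
            (cc (a + 1) * (-muC lam n)) • (Epp ^ a * (Omg lam n * Epp)) := by
          rw [ih, add_mul, add_mul, smul_mul_assoc, smul_mul_assoc, mul_assoc, mul_assoc]
      _ = Epp ^ (a + 1 + 1) * Emm + (1 / 4 : ℂ) • Epp ^ (a + 1) +
            (-muC lam n) • (Epp ^ (a + 1) * Omg lam n) + (((a : ℂ) + 1) / 4) • Epp ^ (a + 1) +
            (cc (a + 1) * (-muC lam n)) • (Epp ^ a * Omg lam n * Epp) := by
          rw [alam_EmEp, ← pow_succ, mul_add, mul_add, mul_smul_comm, mul_smul_comm, mul_one,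
            ← mul_assoc, ← pow_succ]
          rw [← mul_assoc (Epp ^ a) (Omg lam n)]
      _ = Epp ^ (a + 1 + 1) * Emm + ((((a + 1 : ℕ) : ℂ) + 1) / 4) • Epp ^ (a + 1) +
            (cc (a + 1 + 1) * (-muC lam n)) • (Epp ^ (a + 1) * Omg lam n) := by
          have hOm : Epp ^ a * Omg lam n * Epp = (-1 : ℂ) • (Epp ^ (a + 1) * Omg lam n) := by
            rw [mul_assoc, alam_OmgEp', mul_smul_comm, ← mul_assoc, ← pow_succ]
          rw [hOm]
          match_scalars
          · ring
          · push_cast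
            ring
          · linear_combination (muC lam n) * hcc

lemma alam_EmEp_pow' (a : ℕ) : Emm * Epp ^ a =
    Epp ^ a * Emm + ((a : ℂ) / 4) • Epp ^ (a - 1) +
      (cc a * (-muC lam n)) • (Epp ^ (a - 1) * Omg lam n) := by
  rcases a with _ | a'
  · simp
  · have := alam_EmEp_pow lam n a'
    rw [Nat.add_sub_cancel]
    push_cast
    exact this

lemma emAct_single_zero (N : ℕ) (μ : ℂ) (b : ℕ) :
    emAct N μ (single (((fun _ => 0) : Fin N → Fin 2), 0, b) 1)
      = single (((fun _ => 0) : Fin N → Fin 2), 0, b + 1) 1 := by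
  rw [emAct_single]
  simp [DD]

lemma emAct_pow_zero (N : ℕ) (μ : ℂ) (b : ℕ) :
    ((emAct N μ) ^ b) (single (((fun _ => 0) : Fin N → Fin 2), 0, 0) 1)
      = single (((fun _ => 0) : Fin N → Fin 2), 0, b) 1 := by
  induction b with
  | zero => simp
  | succ b ih => rw [pow_succ', Module.End.mul_apply, ih, emAct_single_zero]

lemma epAct_single_zero (N : ℕ) (a b : ℕ) :
    epAct N (single (((fun _ => 0) : Fin N → Fin 2), a, b) 1)
      = single (((fun _ => 0) : Fin N → Fin 2), a + 1, b) 1 := by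
  rw [epAct_single]
  simp

lemma epAct_pow_zero (N : ℕ) (a b : ℕ) :
    ((epAct N) ^ a) (single (((fun _ => 0) : Fin N → Fin 2), 0, b) 1)
      = single (((fun _ => 0) : Fin N → Fin 2), a, b) 1 := by
  induction a with
  | zero => simp
  | succ a ih => rw [pow_succ', Module.End.mul_apply, ih, epAct_single_zero]

lemma wprod_zero (N : ℕ) (I : Fin N → Fin 2) (a b : ℕ) :
    ((List.ofFn fun j => wAct N j ^ (I j : ℕ)).prod)
        (single (((fun _ => 0) : Fin N → Fin 2), a, b) 1)
      = single ((I, a, b) : BI N) 1 := by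
  have hsorted : (List.finRange N).Pairwise (· < ·) := List.pairwise_lt_finRange N
  rw [List.ofFn_eq_map, prod_wAct_pow_single N _ hsorted]
  have h1 : ((List.finRange N).map fun j => sgn (fun _ => 0) j ^ (I j : ℕ)).prod = 1 := by
    refine List.prod_eq_one fun x hx => ?_
    obtain ⟨j, _, rfl⟩ := List.mem_map.mp hx
    rw [sgn_zero_fn, one_pow]
  rw [h1, one_smul]
  have h2 : ((fun k => (0 : Fin 2) + if k ∈ List.finRange N then I k else 0) : Fin N → Fin 2)
      = I := by
    funext k
    simp [List.mem_finRange]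
  rw [h2]

section Rep

variable (lam : ℂ) (n : ℕ)

def rho0 : AGen n → Module.End ℂ (VV (2 * n + 1))
  | AGen.w j => wAct (2 * n + 1) j
  | AGen.Ep => epAct (2 * n + 1)
  | AGen.Em => emAct (2 * n + 1) (muC lam n)

@[simp] lemma rho0_w (j : Fin (2 * n + 1)) : rho0 lam n (AGen.w j) = wAct (2 * n + 1) j := rfl
@[simp] lemma rho0_ep : rho0 lam n AGen.Ep = epAct (2 * n + 1) := rfl
@[simp] lemma rho0_em : rho0 lam n AGen.Em = emAct (2 * n + 1) (muC lam n) := rfl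

def rhoF : FreeAlgebra ℂ (AGen n) →ₐ[ℂ] Module.End ℂ (VV (2 * n + 1)) :=
  FreeAlgebra.lift ℂ (rho0 lam n)

@[simp] lemma rhoF_ι (g : AGen n) : rhoF lam n (FreeAlgebra.ι ℂ g) = rho0 lam n g :=
  FreeAlgebra.lift_ι_apply _ _

lemma rhoF_rel {x y : FreeAlgebra ℂ (AGen n)} (h : ARel lam n x y) :
    rhoF lam n x = rhoF lam n y := by
  have hodd : Odd (2 * n + 1) := ⟨n, rfl⟩
  cases h
  case ww j k =>
    rw [map_add, map_mul, map_mul, rhoF_ι, rhoF_ι, rho0_w, rho0_w, rel_ww]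
    by_cases hjk : j = k
    · rw [if_pos hjk, if_pos hjk, map_ofNat]
    · rw [if_neg hjk, if_neg hjk, map_zero]
  case epw j =>
    rw [map_mul, map_neg, map_mul, rhoF_ι, rhoF_ι, rho0_w, rho0_ep]
    exact rel_epw _ j
  case emw j =>
    rw [map_mul, map_neg, map_mul, rhoF_ι, rhoF_ι, rho0_w, rho0_em]
    exact rel_emw _ _ hodd j
  case ghost =>
    rw [map_sub, map_mul, map_mul, map_add, AlgHom.commutes, map_smul, map_list_prod,
      List.map_ofFn, rhoF_ι, rhoF_ι, rho0_ep, rho0_em]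
    have hfn : ((⇑(rhoF lam n)) ∘ fun i => FreeAlgebra.ι ℂ (AGen.w i))
        = fun i => wAct (2 * n + 1) i := by
      funext i
      simp
    rw [hfn]
    exact rel_ghost (2 * n + 1) (muC lam n) hodd

def rhoA : ALam lam n →ₐ[ℂ] Module.End ℂ (VV (2 * n + 1)) :=
  RingQuot.liftAlgHom ℂ ⟨rhoF lam n, fun _ _ h => rhoF_rel lam n h⟩

lemma rhoA_omega (j : Fin (2 * n + 1)) :
    rhoA lam n (ALam.omega lam n j) = wAct (2 * n + 1) j := by
  rw [ALam.omega, rhoA, RingQuot.liftAlgHom_mkAlgHom_apply, rhoF_ι, rho0_w]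

lemma rhoA_Ep : rhoA lam n (ALam.Ep lam n) = epAct (2 * n + 1) := by
  rw [ALam.Ep, rhoA, RingQuot.liftAlgHom_mkAlgHom_apply, rhoF_ι, rho0_ep]

lemma rhoA_Em : rhoA lam n (ALam.Em lam n) = emAct (2 * n + 1) (muC lam n) := by
  rw [ALam.Em, rhoA, RingQuot.liftAlgHom_mkAlgHom_apply, rhoF_ι, rho0_em]

def Phi : ALam lam n →ₗ[ℂ] VV (2 * n + 1) where
  toFun x := rhoA lam n x (single (((fun _ => 0) : Fin (2 * n + 1) → Fin 2), 0, 0) 1)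
  map_add' x y := by simp only [map_add, LinearMap.add_apply]
  map_smul' c x := by simp only [map_smul, LinearMap.smul_apply, RingHom.id_apply]

def mono (p : BI (2 * n + 1)) : ALam lam n :=
  PP (ALam.omega lam n) p.1 * ALam.Ep lam n ^ p.2.1 * ALam.Em lam n ^ p.2.2

lemma Phi_mono (p : BI (2 * n + 1)) : Phi lam n (mono lam n p) = single p 1 := by
  obtain ⟨I, a, b⟩ := p
  show rhoA lam n _ _ = _
  have hPP : rhoA lam n (PP (ALam.omega lam n) I)
      = (List.ofFn fun j => wAct (2 * n + 1) j ^ (I j : ℕ)).prod := by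
    rw [PP, map_list_prod, List.map_ofFn]
    exact congrArg List.prod (congrArg List.ofFn (funext fun j => by
      simp [Function.comp, map_pow, rhoA_omega]))
  rw [mono, map_mul, map_mul, map_pow, map_pow, rhoA_Ep, rhoA_Em, hPP,
    Module.End.mul_apply, Module.End.mul_apply, emAct_pow_zero, epAct_pow_zero, wprod_zero]

end Rep
lemma mono_one : mono lam n ((fun _ => 0), 0, 0) = 1 := by
  rw [mono]
  simp [PP_zero_fn]

lemma w_mul_mono (j : Fin (2 * n + 1)) (p : BI (2 * n + 1)) :
    ALam.omega lam n j * mono lam n p = sgn p.1 j • mono lam n (upd p.1 j, p.2) := by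
  obtain ⟨I, a, b⟩ := p
  show ωA j * (PP ωA I * Epp ^ a * Emm ^ b) = _
  rw [mono, ← mul_assoc, ← mul_assoc,
    L_move (2 * n + 1) (ALam.omega lam n) (fun _ _ h => alam_ww_ne lam n h) (alam_ww_sq lam n)
      I j,
    smul_mul_assoc, smul_mul_assoc]

lemma ep_mul_mono (p : BI (2 * n + 1)) :
    ALam.Ep lam n * mono lam n p = TT p.1 • mono lam n (p.1, p.2.1 + 1, p.2.2) := by
  obtain ⟨I, a, b⟩ := p
  show Epp * (PP ωA I * Epp ^ a * Emm ^ b) = _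
  rw [mono]
  calc Epp * (PP ωA I * Epp ^ a * Emm ^ b)
      = ((Epp * PP ωA I) * Epp ^ a) * Emm ^ b := by rw [← mul_assoc, ← mul_assoc]
    _ = TT I • ((PP ωA I * (Epp * Epp ^ a)) * Emm ^ b) := by
        rw [L_comm (2 * n + 1) _ Epp (alam_epw lam n) I, smul_mul_assoc, smul_mul_assoc,
          mul_assoc, ← mul_assoc (PP ωA I * Epp), mul_assoc (PP ωA I)]
    _ = TT I • (PP ωA I * Epp ^ (a + 1) * Emm ^ b) := by rw [← pow_succ']

lemma em_mul_mono (p : BI (2 * n + 1)) :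
    ∃ c2 : ℂ, ALam.Em lam n * mono lam n p
      = TT p.1 • mono lam n (p.1, p.2.1, p.2.2 + 1)
        + (TT p.1 * ((p.2.1 : ℂ) / 4)) • mono lam n (p.1, p.2.1 - 1, p.2.2)
        + c2 • mono lam n (cmpl p.1, p.2.1 - 1, p.2.2) := by
  obtain ⟨I, a, b⟩ := p
  obtain ⟨c0, hc0⟩ := L_PPomega (2 * n + 1) (ALam.omega lam n)
    (fun _ _ h => alam_ww_ne lam n h) (alam_ww_sq lam n) I
  have hc0' : PP ωA I * Omg lam n = c0 • PP ωA (cmpl I) := by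
    rw [alam_Omg_eq]
    exact hc0
  refine ⟨TT I * ((cc a * (-muC lam n)) * ((-1 : ℂ) ^ (a - 1) * c0)), ?_⟩
  simp only [mono]
  calc Emm * (PP ωA I * Epp ^ a * Emm ^ b)
      = ((Emm * PP ωA I) * Epp ^ a) * Emm ^ b := by rw [← mul_assoc, ← mul_assoc]
    _ = TT I • ((PP ωA I * (Emm * Epp ^ a)) * Emm ^ b) := by
        rw [L_comm (2 * n + 1) _ Emm (alam_emw lam n) I, smul_mul_assoc, smul_mul_assoc,
          mul_assoc, ← mul_assoc (PP ωA I * Emm), mul_assoc (PP ωA I)]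
    _ = TT I • ((PP ωA I * (Epp ^ a * Emm) + ((a : ℂ) / 4) • (PP ωA I * Epp ^ (a - 1)) +
          (cc a * (-muC lam n)) • (PP ωA I * (Epp ^ (a - 1) * Omg lam n))) * Emm ^ b) := by
        rw [alam_EmEp_pow', mul_add, mul_add, mul_smul_comm, mul_smul_comm]
    _ = TT I • ((PP ωA I * Epp ^ a * (Emm * Emm ^ b)) +
          ((a : ℂ) / 4) • (PP ωA I * Epp ^ (a - 1) * Emm ^ b) +
          (cc a * (-muC lam n)) • ((PP ωA I * (Epp ^ (a - 1) * Omg lam n)) * Emm ^ b)) := by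
        rw [add_mul, add_mul, smul_mul_assoc, smul_mul_assoc, ← mul_assoc, mul_assoc _ Emm]
    _ = TT I • ((PP ωA I * Epp ^ a * Emm ^ (b + 1)) +
          ((a : ℂ) / 4) • (PP ωA I * Epp ^ (a - 1) * Emm ^ b) +
          (cc a * (-muC lam n) * (-1 : ℂ) ^ (a - 1)) • c0 •
            (PP ωA (cmpl I) * Epp ^ (a - 1) * Emm ^ b)) := by
        rw [← pow_succ', anti_pow Epp (Omg lam n) (alam_OmgEp lam n) (a - 1), mul_smul_comm,
          ← mul_assoc, hc0', smul_mul_assoc, smul_mul_assoc, smul_mul_assoc, smul_smul]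
    _ = _ := by
        match_scalars <;> ring

lemma span_top : ∀ x : ALam lam n, x ∈ Submodule.span ℂ (Set.range (mono lam n)) := by
  have hmono : ∀ p, mono lam n p ∈ Submodule.span ℂ (Set.range (mono lam n)) :=
    fun p => Submodule.subset_span ⟨p, rfl⟩
  have hgen : ∀ g : AGen n, ∀ s ∈ Submodule.span ℂ (Set.range (mono lam n)),
      RingQuot.mkAlgHom ℂ (ARel lam n) (FreeAlgebra.ι ℂ g) * s
        ∈ Submodule.span ℂ (Set.range (mono lam n)) := by
    intro g s hs
    induction hs using Submodule.span_induction with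
    | mem x hx =>
      obtain ⟨p, rfl⟩ := hx
      cases g with
      | w j =>
        rw [show RingQuot.mkAlgHom ℂ (ARel lam n) (FreeAlgebra.ι ℂ (AGen.w j))
            = ALam.omega lam n j from rfl, w_mul_mono]
        exact Submodule.smul_mem _ _ (hmono _)
      | Ep =>
        rw [show RingQuot.mkAlgHom ℂ (ARel lam n) (FreeAlgebra.ι ℂ AGen.Ep)
            = ALam.Ep lam n from rfl, ep_mul_mono]
        exact Submodule.smul_mem _ _ (hmono _)
      | Em =>
        obtain ⟨c2, hc2⟩ := em_mul_mono lam n p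
        rw [show RingQuot.mkAlgHom ℂ (ARel lam n) (FreeAlgebra.ι ℂ AGen.Em)
            = ALam.Em lam n from rfl, hc2]
        exact add_mem (add_mem (Submodule.smul_mem _ _ (hmono _))
          (Submodule.smul_mem _ _ (hmono _))) (Submodule.smul_mem _ _ (hmono _))
    | zero =>
      rw [mul_zero]
      exact zero_mem _
    | add x y hx hy ihx ihy =>
      rw [mul_add]
      exact add_mem ihx ihy
    | smul c x hx ih =>
      rw [mul_smul_comm]
      exact Submodule.smul_mem _ _ ih
  have key : ∀ z : FreeAlgebra ℂ (AGen n),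
      ∀ s ∈ Submodule.span ℂ (Set.range (mono lam n)),
      RingQuot.mkAlgHom ℂ (ARel lam n) z * s ∈ Submodule.span ℂ (Set.range (mono lam n)) := by
    intro z
    induction z using FreeAlgebra.induction with
    | grade0 r =>
      intro s hs
      rw [AlgHom.commutes, ← Algebra.smul_def]
      exact Submodule.smul_mem _ _ hs
    | grade1 g => exact hgen g
    | mul x y ihx ihy =>
      intro s hs
      rw [map_mul, mul_assoc]
      exact ihx _ (ihy s hs)
    | add x y ihx ihy =>
      intro s hs
      rw [map_add, add_mul]
      exact add_mem (ihx s hs) (ihy s hs)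
  intro x
  obtain ⟨z, rfl⟩ := RingQuot.mkAlgHom_surjective ℂ (ARel lam n) x
  have h1 : (1 : ALam lam n) ∈ Submodule.span ℂ (Set.range (mono lam n)) := by
    rw [← mono_one lam n]
    exact hmono _
  simpa using key z 1 h1

theorem exists_basis :
    ∃ b : Module.Basis (BI (2 * n + 1)) ℂ (ALam lam n), ∀ p, b p = mono lam n p := by
  have hli : LinearIndependent ℂ (mono lam n) := by
    refine LinearIndependent.of_comp (Phi lam n) ?_
    have h3 : (⇑(Phi lam n) ∘ mono lam n) = fun p : BI (2 * n + 1) => single p 1 :=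
      funext fun p => Phi_mono lam n p
    rw [h3]
    have h4 := (Finsupp.basisSingleOne (R := ℂ) (ι := BI (2 * n + 1))).linearIndependent
    rwa [Finsupp.coe_basisSingleOne] at h4
  have hsp : ⊤ ≤ Submodule.span ℂ (Set.range (mono lam n)) := fun x _ => span_top lam n x
  exact ⟨Module.Basis.mk hli hsp, fun p => Module.Basis.mk_apply hli hsp p⟩

end ALamSide
end
end ALamAux

/-- PBW-type basis of `A_λ(n)`: the elements
`ω^I E₊^α E₋^β = ω_1^{i_1} ⋯ ω_{2n+1}^{i_{2n+1}} E₊^α E₋^β`, for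
`I ∈ {0,1}^{2n+1}` and `α, β ∈ ℕ`, form a ℂ-vector space basis of `A_λ(n)`. -/
theorem aLam_basis (lam : ℂ) (n : ℕ) :
    ∃ b : Module.Basis ((Fin (2 * n + 1) → Fin 2) × ℕ × ℕ) ℂ (ALam lam n),
      ∀ (I : Fin (2 * n + 1) → Fin 2) (α β : ℕ),
        b (I, α, β) =
          (List.ofFn fun j : Fin (2 * n + 1) =>
              ALam.omega lam n j ^ (I j : ℕ)).prod *
            ALam.Ep lam n ^ α * ALam.Em lam n ^ β := by
  obtain ⟨b, hb⟩ := ALamAux.exists_basis lam n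
  exact ⟨b, fun I α β => (hb (I, α, β)).trans rfl⟩
end

section
/- For every λ ∈ ℂ with λ ≠ 0, there is an isomorphism of ℂ-algebras A_λ ≅ U_θ / ⟨θ² − λ²⟩, the quotient of U_θ by the two-sided ideal generated by θ² − λ². (This realizes A_λ as the primitive quotient B_{λ² − 1/16} of the enveloping algebra of osp(1,2), since U_θ is isomorphic to that enveloping algebra with Casimir element C = θ² − 1/16.) -/
/-- Generators of the algebra `A_λ = A_λ(0)`: `P`, `E₊`, `E₋`. -/
inductive A0Gen : Type
  | P : A0Gen
  | Ep : A0Gen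
  | Em : A0Gen

/-- The defining relations of `A_λ`: `P² = 1`, `P E₊ = −E₊ P`, `P E₋ = −E₋ P`,
and `E₊E₋ − E₋E₊ = −1/4 + λP`. -/
inductive A0Rel (lam : ℂ) : FreeAlgebra ℂ A0Gen → FreeAlgebra ℂ A0Gen → Prop
  | Psq : A0Rel lam (FreeAlgebra.ι ℂ A0Gen.P * FreeAlgebra.ι ℂ A0Gen.P) 1
  | PEp : A0Rel lam
      (FreeAlgebra.ι ℂ A0Gen.P * FreeAlgebra.ι ℂ A0Gen.Ep)
      (-(FreeAlgebra.ι ℂ A0Gen.Ep * FreeAlgebra.ι ℂ A0Gen.P))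
  | PEm : A0Rel lam
      (FreeAlgebra.ι ℂ A0Gen.P * FreeAlgebra.ι ℂ A0Gen.Em)
      (-(FreeAlgebra.ι ℂ A0Gen.Em * FreeAlgebra.ι ℂ A0Gen.P))
  | ghost : A0Rel lam
      (FreeAlgebra.ι ℂ A0Gen.Ep * FreeAlgebra.ι ℂ A0Gen.Em -
        FreeAlgebra.ι ℂ A0Gen.Em * FreeAlgebra.ι ℂ A0Gen.Ep)
      (algebraMap ℂ (FreeAlgebra ℂ A0Gen) (-(1 / 4)) +
        lam • FreeAlgebra.ι ℂ A0Gen.P)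

/-- The algebra `A_λ`, presented by generators and relations. -/
abbrev AZero (lam : ℂ) : Type := RingQuot (A0Rel lam)

/-- Generators of `U_θ`: `E₊`, `E₋`, `θ`. -/
inductive UGen : Type
  | Ep : UGen
  | Em : UGen
  | th : UGen

/-- The defining relations of `U_θ`: `E₊E₋ − E₋E₊ = −1/4 + θ`,
`θE₊ = −E₊θ`, `θE₋ = −E₋θ`. -/
inductive URel : FreeAlgebra ℂ UGen → FreeAlgebra ℂ UGen → Prop
  | ghost : URel
      (FreeAlgebra.ι ℂ UGen.Ep * FreeAlgebra.ι ℂ UGen.Em -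
        FreeAlgebra.ι ℂ UGen.Em * FreeAlgebra.ι ℂ UGen.Ep)
      (algebraMap ℂ (FreeAlgebra ℂ UGen) (-(1 / 4)) + FreeAlgebra.ι ℂ UGen.th)
  | thEp : URel
      (FreeAlgebra.ι ℂ UGen.th * FreeAlgebra.ι ℂ UGen.Ep)
      (-(FreeAlgebra.ι ℂ UGen.Ep * FreeAlgebra.ι ℂ UGen.th))
  | thEm : URel
      (FreeAlgebra.ι ℂ UGen.th * FreeAlgebra.ι ℂ UGen.Em)
      (-(FreeAlgebra.ι ℂ UGen.Em * FreeAlgebra.ι ℂ UGen.th))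

/-- The algebra `U_θ` (isomorphic to the enveloping algebra of `osp(1,2)`). -/
abbrev UTheta : Type := RingQuot URel

/-- The image of the generator `θ` in `U_θ`. -/
noncomputable def UTheta.theta : UTheta :=
  RingQuot.mkAlgHom ℂ URel (FreeAlgebra.ι ℂ UGen.th)

/-- The relation whose `RingQuot` is the quotient of `U_θ` by the two-sided ideal
generated by `θ² − λ²`. -/
inductive UThetaQuotRel (lam : ℂ) : UTheta → UTheta → Prop
  | rel : UThetaQuotRel lam (UTheta.theta ^ 2 - algebraMap ℂ UTheta (lam ^ 2)) 0

noncomputable section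

abbrev QT (lam : ℂ) := RingQuot (UThetaQuotRel lam)

def f0 (lam : ℂ) : FreeAlgebra ℂ A0Gen →ₐ[ℂ] QT lam :=
  FreeAlgebra.lift ℂ fun g => match g with
    | A0Gen.P => lam⁻¹ • RingQuot.mkAlgHom ℂ (UThetaQuotRel lam) UTheta.theta
    | A0Gen.Ep => RingQuot.mkAlgHom ℂ (UThetaQuotRel lam)
        (RingQuot.mkAlgHom ℂ URel (FreeAlgebra.ι ℂ UGen.Ep))
    | A0Gen.Em => RingQuot.mkAlgHom ℂ (UThetaQuotRel lam)
        (RingQuot.mkAlgHom ℂ URel (FreeAlgebra.ι ℂ UGen.Em))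

lemma theta_sq (lam : ℂ) :
    RingQuot.mkAlgHom ℂ (UThetaQuotRel lam) UTheta.theta *
      RingQuot.mkAlgHom ℂ (UThetaQuotRel lam) UTheta.theta
    = algebraMap ℂ (QT lam) (lam ^ 2) := by
  have h := RingQuot.mkAlgHom_rel ℂ (UThetaQuotRel.rel (lam := lam))
  rw [map_sub, map_zero, sub_eq_zero, AlgHom.commutes, pow_two, map_mul] at h
  exact h

lemma f0_rel (lam : ℂ) (hlam : lam ≠ 0) : ∀ ⦃x y⦄, A0Rel lam x y → f0 lam x = f0 lam y := by
  intro x y h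
  induction h with
  | Psq =>
    simp only [f0, map_mul, map_one, FreeAlgebra.lift_ι_apply]
    rw [smul_mul_smul_comm, theta_sq, Algebra.smul_def, ← map_mul,
      show lam⁻¹ * lam⁻¹ * lam ^ 2 = 1 by field_simp, map_one]
  | PEp =>
    have h := congrArg (RingQuot.mkAlgHom ℂ (UThetaQuotRel lam))
      (RingQuot.mkAlgHom_rel ℂ URel.thEp)
    simp only [map_mul, map_neg] at h
    simp only [f0, map_mul, map_neg, FreeAlgebra.lift_ι_apply, UTheta.theta]
    rw [smul_mul_assoc, mul_smul_comm, h, smul_neg]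
  | PEm =>
    have h := congrArg (RingQuot.mkAlgHom ℂ (UThetaQuotRel lam))
      (RingQuot.mkAlgHom_rel ℂ URel.thEm)
    simp only [map_mul, map_neg] at h
    simp only [f0, map_mul, map_neg, FreeAlgebra.lift_ι_apply, UTheta.theta]
    rw [smul_mul_assoc, mul_smul_comm, h, smul_neg]
  | ghost =>
    have h := congrArg (RingQuot.mkAlgHom ℂ (UThetaQuotRel lam))
      (RingQuot.mkAlgHom_rel ℂ URel.ghost)
    simp only [map_sub, map_add, map_mul, AlgHom.commutes] at h
    simp only [f0, map_sub, map_add, map_mul, map_smul, FreeAlgebra.lift_ι_apply,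
      AlgHom.commutes, UTheta.theta]
    rw [h, smul_smul, mul_inv_cancel₀ hlam, one_smul]

def g0 (lam : ℂ) : FreeAlgebra ℂ UGen →ₐ[ℂ] AZero lam :=
  FreeAlgebra.lift ℂ fun g => match g with
    | UGen.Ep => RingQuot.mkAlgHom ℂ (A0Rel lam) (FreeAlgebra.ι ℂ A0Gen.Ep)
    | UGen.Em => RingQuot.mkAlgHom ℂ (A0Rel lam) (FreeAlgebra.ι ℂ A0Gen.Em)
    | UGen.th => lam • RingQuot.mkAlgHom ℂ (A0Rel lam) (FreeAlgebra.ι ℂ A0Gen.P)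

lemma g0_rel (lam : ℂ) : ∀ ⦃x y⦄, URel x y → g0 lam x = g0 lam y := by
  intro x y h
  induction h with
  | ghost =>
    have h := RingQuot.mkAlgHom_rel ℂ (A0Rel.ghost (lam := lam))
    simp only [map_sub, map_add, map_mul, map_smul, AlgHom.commutes] at h
    simp only [g0, map_sub, map_add, map_mul, FreeAlgebra.lift_ι_apply, AlgHom.commutes]
    rw [h]
  | thEp =>
    have h := RingQuot.mkAlgHom_rel ℂ (A0Rel.PEp (lam := lam))
    simp only [map_mul, map_neg] at h
    simp only [g0, map_mul, map_neg, FreeAlgebra.lift_ι_apply]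
    rw [smul_mul_assoc, h, mul_smul_comm, smul_neg]
  | thEm =>
    have h := RingQuot.mkAlgHom_rel ℂ (A0Rel.PEm (lam := lam))
    simp only [map_mul, map_neg] at h
    simp only [g0, map_mul, map_neg, FreeAlgebra.lift_ι_apply]
    rw [smul_mul_assoc, h, mul_smul_comm, smul_neg]

def g1 (lam : ℂ) : UTheta →ₐ[ℂ] AZero lam :=
  RingQuot.liftAlgHom ℂ ⟨g0 lam, g0_rel lam⟩

lemma g1_rel (lam : ℂ) : ∀ ⦃x y⦄, UThetaQuotRel lam x y → g1 lam x = g1 lam y := by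
  rintro _ _ ⟨⟩
  have hP := RingQuot.mkAlgHom_rel ℂ (A0Rel.Psq (lam := lam))
  simp only [map_mul, map_one] at hP
  rw [map_sub, map_zero, sub_eq_zero, AlgHom.commutes, pow_two, map_mul]
  simp only [g1, UTheta.theta, RingQuot.liftAlgHom_mkAlgHom_apply]
  simp only [g0, FreeAlgebra.lift_ι_apply]
  rw [smul_mul_smul_comm, hP, ← pow_two, Algebra.algebraMap_eq_smul_one]

def gq (lam : ℂ) : QT lam →ₐ[ℂ] AZero lam :=
  RingQuot.liftAlgHom ℂ ⟨g1 lam, g1_rel lam⟩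

def fA (lam : ℂ) (hlam : lam ≠ 0) : AZero lam →ₐ[ℂ] QT lam :=
  RingQuot.liftAlgHom ℂ ⟨f0 lam, f0_rel lam hlam⟩


/-- For `λ ≠ 0`, `A_λ ≅ U_θ / ⟨θ² − λ²⟩` as ℂ-algebras: `A_λ` is the primitive
quotient `B_{λ² − 1/16}` of the enveloping algebra of `osp(1,2)`. -/
theorem aZero_iso_uTheta_quot (lam : ℂ) (hlam : lam ≠ 0) :
    Nonempty (AZero lam ≃ₐ[ℂ] RingQuot (UThetaQuotRel lam)) := by
  refine ⟨AlgEquiv.ofAlgHom (fA lam hlam) (gq lam) ?_ ?_⟩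
  · apply RingQuot.ringQuot_ext'
    apply RingQuot.ringQuot_ext' (S := ℂ)
    apply FreeAlgebra.hom_ext
    funext g
    cases g <;>
      simp [fA, gq, g1, g0, f0, UTheta.theta, RingQuot.liftAlgHom_mkAlgHom_apply,
        smul_smul, mul_inv_cancel₀ hlam, inv_mul_cancel₀ hlam]
  · apply RingQuot.ringQuot_ext'
    apply FreeAlgebra.hom_ext
    funext g
    cases g <;>
      simp [fA, gq, g1, g0, f0, UTheta.theta, RingQuot.liftAlgHom_mkAlgHom_apply,
        smul_smul, mul_inv_cancel₀ hlam, inv_mul_cancel₀ hlam]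


end
end
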